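/- In ℝ^d with the sup norm (d ≥ 2), any M-set has cardinality at most 2d−1. -/
import Mathlib


def IsMSet (X : Type*) [NormedAddCommGroup X] (S : Set X) : Prop :=
  (∀ x ∈ S, 1 < ‖x‖) ∧ ∀ x ∈ S, ∀ y ∈ S, x ≠ y → ‖x + y‖ = 2

theorem mset_sup_norm_upper (d : ℕ) (hd : 2 ≤ d)
    (S : Set (Fin d → ℝ)) (hS : IsMSet (Fin d → ℝ) S) :
    S.Finite ∧ S.ncard ≤ 2 * d - 1 := by
  classical
  obtain ⟨hnorm, hsum⟩ := hS
  have hd0 : 0 < d := by omega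
  -- coordinate bound for distinct pairs
  have hpair : ∀ x ∈ S, ∀ y ∈ S, x ≠ y → ∀ i, |x i + y i| ≤ 2 := by
    intro x hx y hy hxy i
    have h := norm_le_pi_norm (x + y) i
    rw [hsum x hx y hy hxy] at h
    simpa [Real.norm_eq_abs] using h
  -- each point has a big coordinate
  have hbig : ∀ x : S, ∃ i, 1 < |x.1 i| := by
    rintro ⟨x, hx⟩
    by_contra h
    push_neg at h
    have : ‖x‖ ≤ 1 := by
      rw [pi_norm_le_iff_of_nonneg zero_le_one]
      intro i; simpa [Real.norm_eq_abs] using h i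
    linarith [hnorm x hx]
  set f : S → Fin d × Bool := fun x =>
    ((hbig x).choose, decide (0 < x.1 (hbig x).choose)) with hfdef
  have key : ∀ x : S, ((f x).2 = true ∧ 1 < x.1 (f x).1) ∨
      ((f x).2 = false ∧ x.1 (f x).1 < -1) := by
    intro x
    have hi : 1 < |x.1 (hbig x).choose| := (hbig x).choose_spec
    by_cases hpos : 0 < x.1 (hbig x).choose
    · left
      constructor
      · simp [hfdef, hpos]
      · have : (f x).1 = (hbig x).choose := rfl
        rw [this]
        rwa [abs_of_pos hpos] at hi
    · right
      constructor
      · simp [hfdef, hpos]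
      · have : (f x).1 = (hbig x).choose := rfl
        rw [this]
        push_neg at hpos
        rw [abs_of_nonpos hpos] at hi
        linarith
  have hinj : Function.Injective f := by
    intro a b hab
    by_contra hne
    have hne' : a.1 ≠ b.1 := fun h => hne (Subtype.ext h)
    have hp := hpair a.1 a.2 b.1 b.2 hne' (f a).1
    rcases key a with ⟨ha2, ha1⟩ | ⟨ha2, ha1⟩ <;>
      rcases key b with ⟨hb2, hb1⟩ | ⟨hb2, hb1⟩
    · rw [← hab] at hb1
      have := abs_le.mp hp
      linarith
    · rw [hab] at ha2; rw [ha2] at hb2; exact absurd hb2 (by simp)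
    · rw [hab] at ha2; rw [ha2] at hb2; exact absurd hb2 (by simp)
    · rw [← hab] at hb1
      have := abs_le.mp hp
      linarith
  have hSfin : Finite ↥S := Finite.of_injective f hinj
  have hfin : S.Finite := Set.toFinite S
  refine ⟨hfin, ?_⟩
  have hcard_le : S.ncard ≤ 2 * d := by
    have h1 : Nat.card ↥S ≤ Nat.card (Fin d × Bool) :=
      Nat.card_le_card_of_injective f hinj
    have h2 : Nat.card (Fin d × Bool) = 2 * d := by
      simp [Nat.card_eq_fintype_card, Fintype.card_prod]
      ring
    rw [h2] at h1
    rwa [← Nat.card_coe_set_eq]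
  rcases Nat.lt_or_ge S.ncard (2 * d) with h | h
  · omega
  have hcard : S.ncard = 2 * d := le_antisymm hcard_le h
  exfalso
  haveI := hfin.fintype
  have hcard' : Fintype.card ↥S = 2 * d := by
    rw [← Nat.card_eq_fintype_card, Nat.card_coe_set_eq, hcard]
  have hbij : Function.Bijective f := by
    rw [Fintype.bijective_iff_injective_and_card]
    refine ⟨hinj, ?_⟩
    rw [hcard']
    simp [Fintype.card_prod]
    ring
  set i0 : Fin d := ⟨0, hd0⟩ with hi0
  obtain ⟨a, ha⟩ := hbij.2 (i0, true)
  obtain ⟨b, hb⟩ := hbij.2 (i0, false)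
  have ha1 : 1 < a.1 i0 := by
    rcases key a with ⟨h2, h1⟩ | ⟨h2, h1⟩
    · rw [ha] at h1; exact h1
    · rw [ha] at h2; simp at h2
  have hb1 : b.1 i0 < -1 := by
    rcases key b with ⟨h2, h1⟩ | ⟨h2, h1⟩
    · rw [hb] at h2; simp at h2
    · rw [hb] at h1; exact h1
  -- for j ≠ i0, a and b have small coordinates
  have hsmall1 : ∀ (x : S) (j : Fin d), f x ≠ (j, true) → x.1 j < 1 := by
    intro x j hne
    obtain ⟨z, hz⟩ := hbij.2 (j, true)
    have hzx : z ≠ x := by rintro rfl; exact hne hz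
    have hz1 : 1 < z.1 j := by
      rcases key z with ⟨h2, h1⟩ | ⟨h2, h1⟩
      · rw [hz] at h1; exact h1
      · rw [hz] at h2; simp at h2
    have hzx' : z.1 ≠ x.1 := fun h => hzx (Subtype.ext h)
    have hp := abs_le.mp (hpair z.1 z.2 x.1 x.2 hzx' j)
    linarith
  have hsmall2 : ∀ (x : S) (j : Fin d), f x ≠ (j, false) → -1 < x.1 j := by
    intro x j hne
    obtain ⟨z, hz⟩ := hbij.2 (j, false)
    have hzx : z ≠ x := by rintro rfl; exact hne hz
    have hz1 : z.1 j < -1 := by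
      rcases key z with ⟨h2, h1⟩ | ⟨h2, h1⟩
      · rw [hz] at h2; simp at h2
      · rw [hz] at h1; exact h1
    have hzx' : z.1 ≠ x.1 := fun h => hzx (Subtype.ext h)
    have hp := abs_le.mp (hpair z.1 z.2 x.1 x.2 hzx' j)
    linarith
  have hab : a.1 ≠ b.1 := by
    intro h
    have : a.1 i0 = b.1 i0 := by rw [h]
    linarith
  -- the witness coordinate for ‖a+b‖ = 2 must be i0
  have hw : ∃ j, 2 ≤ |a.1 j + b.1 j| := by
    by_contra h
    push_neg at h
    have : ‖a.1 + b.1‖ < 2 := by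
      rw [pi_norm_lt_iff (by norm_num : (0:ℝ) < 2)]
      intro j
      simpa [Real.norm_eq_abs] using h j
    rw [hsum a.1 a.2 b.1 b.2 hab] at this
    linarith
  obtain ⟨j, hj⟩ := hw
  have hji0 : j = i0 := by
    by_contra hne
    have haj1 : a.1 j < 1 := hsmall1 a j (by rw [ha]; exact fun h => hne (congrArg Prod.fst h).symm)
    have haj2 : -1 < a.1 j := hsmall2 a j (by rw [ha]; exact fun h => hne (congrArg Prod.fst h).symm)
    have hbj1 : b.1 j < 1 := hsmall1 b j (by rw [hb]; exact fun h => hne (congrArg Prod.fst h).symm)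
    have hbj2 : -1 < b.1 j := hsmall2 b j (by rw [hb]; exact fun h => hne (congrArg Prod.fst h).symm)
    have habs : |a.1 j + b.1 j| < 2 := abs_lt.mpr ⟨by linarith, by linarith⟩
    linarith
  subst hji0
  -- third point
  have hthird : ∃ w : S, w ≠ a ∧ w ≠ b := by
    by_contra h
    push_neg at h
    have hsub : (Finset.univ : Finset ↥S) ⊆ {a, b} := by
      intro w _
      rcases eq_or_ne w a with rfl | hwa
      · simp
      · simp [h w hwa]
    have := Finset.card_le_card hsub
    have h2 : ({a, b} : Finset ↥S).card ≤ 2 := by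
      apply le_trans (Finset.card_insert_le _ _)
      simp
    rw [Finset.card_univ, hcard'] at this
    omega
  obtain ⟨w, hwa, hwb⟩ := hthird
  have hwa' : w.1 ≠ a.1 := fun h => hwa (Subtype.ext h)
  have hwb' : w.1 ≠ b.1 := fun h => hwb (Subtype.ext h)
  have hpa := abs_le.mp (hpair w.1 w.2 a.1 a.2 hwa' i0)
  have hpb := abs_le.mp (hpair w.1 w.2 b.1 b.2 hwb' i0)
  rcases abs_le.mp (hpair a.1 a.2 b.1 b.2 hab i0) with ⟨hl, hr⟩
  rcases le_or_gt 2 (a.1 i0 + b.1 i0) with hc | hc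
  · -- a j + b j = 2, so a j > 3
    have ha3 : 3 < a.1 i0 := by linarith
    -- w j < -1 from pair with a, then pair with b gives contradiction
    linarith
  · have hc2 : a.1 i0 + b.1 i0 ≤ -2 := by
      rcases le_abs.mp hj with h' | h'
      · linarith
      · linarith
    have hb3 : b.1 i0 < -3 := by linarith
    linarith
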